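/- Fix a positive integer d and v ∈ I(d). Let C be a v-chain, regarded as a (square-free) monomial in ON(v), and let w ∈ I(d). If w ortho-dominates C, then w dominates the monomial C ∪ C^# of N(v). -/

import Mathlib

namespace OG

/-- `star d k = k* = 2d+1-k`. -/
def star (d k : ℕ) : ℕ := 2 * d + 1 - k

/-- `I(d,2d)`: the set of `d`-element subsets of `{1,…,2d}`. -/
def Idn (d : ℕ) : Set (Finset ℕ) :=
  {v | v.card = d ∧ ∀ k ∈ v, 1 ≤ k ∧ k ≤ 2 * d}

/-- The partial order on `I(d,2d)`: entrywise comparison of increasing enumerations. -/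
def leI (x y : Finset ℕ) : Prop :=
  List.Forall₂ (· ≤ ·) (x.sort (· ≤ ·)) (y.sort (· ≤ ·))

/-- `I(d)`: elements of `I(d,2d)` containing exactly one of `k`, `k*` for each `k`,
with evenly many entries exceeding `d`. -/
def Iset (d : ℕ) : Set (Finset ℕ) :=
  {v | v ∈ Idn d ∧ (∀ k, 1 ≤ k → k ≤ 2 * d → (k ∈ v ↔ star d k ∉ v)) ∧
       Even ((v.filter (fun k => d < k)).card)}

/-- membership in `N(v)`. -/
def inN (d : ℕ) (v : Finset ℕ) (p : ℕ × ℕ) : Prop :=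
  1 ≤ p.1 ∧ p.1 ≤ 2 * d ∧ 1 ≤ p.2 ∧ p.2 ≤ 2 * d ∧ p.1 ∉ v ∧ p.2 ∈ v ∧ p.2 < p.1

/-- membership in `OR(v)`. -/
def inOR (d : ℕ) (v : Finset ℕ) (p : ℕ × ℕ) : Prop :=
  1 ≤ p.1 ∧ p.1 ≤ 2 * d ∧ 1 ≤ p.2 ∧ p.2 ≤ 2 * d ∧ p.1 ∉ v ∧ p.2 ∈ v ∧ p.1 < star d p.2

/-- membership in `ON(v) = OR(v) ∩ N(v)`. -/
def inON (d : ℕ) (v : Finset ℕ) (p : ℕ × ℕ) : Prop := inN d v p ∧ inOR d v p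

/-- membership in the diagonal `D(v)`. -/
def inDiag (d : ℕ) (v : Finset ℕ) (p : ℕ × ℕ) : Prop :=
  p.1 ∉ v ∧ p.2 ∈ v ∧ p.1 = star d p.2

instance (d : ℕ) (v : Finset ℕ) : DecidablePred (inN d v) := fun p => by
  unfold inN; infer_instance

instance (d : ℕ) (v : Finset ℕ) : DecidablePred (inOR d v) := fun p => by
  unfold inOR; infer_instance

instance (d : ℕ) (v : Finset ℕ) : DecidablePred (inON d v) := fun p => by
  unfold inON; infer_instance

instance (d : ℕ) (v : Finset ℕ) : DecidablePred (inDiag d v) := fun p => by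
  unfold inDiag; infer_instance

/-- `(R,C) > (r,c)` iff `R > r` and `C < c`. -/
def pgt (A B : ℕ × ℕ) : Prop := B.1 < A.1 ∧ A.2 < B.2

instance : DecidableRel pgt := fun A B => by unfold pgt; infer_instance

/-- `(R,C)` dominates `(r,c)` iff `R ≥ r` and `C ≤ c`. -/
def pdom (A B : ℕ × ℕ) : Prop := B.1 ≤ A.1 ∧ A.2 ≤ B.2

/-- vertical projection `p_v(r,c) = (c*,c)`. -/
def pv (d : ℕ) (α : ℕ × ℕ) : ℕ × ℕ := (star d α.2, α.2)

/-- horizontal projection `p_h(r,c) = (r,r*)`. -/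
def ph (d : ℕ) (α : ℕ × ℕ) : ℕ × ℕ := (α.1, star d α.1)

/-- `(r,c)^# = (c*,r*)`. -/
def hash (d : ℕ) (α : ℕ × ℕ) : ℕ × ℕ := (star d α.2, star d α.1)

/-- A `v`-chain: a strictly decreasing (under `pgt`) list of elements of `ON(v)`. -/
def IsVChain (d : ℕ) (v : Finset ℕ) (C : List (ℕ × ℕ)) : Prop :=
  C.Chain' pgt ∧ ∀ α ∈ C, inON d v α

/-- Two consecutive elements `(r,c) > (R,C)` of a `v`-chain are connected
if `r* ≥ C` and `R > r*`. -/
def Connected (d : ℕ) (α β : ℕ × ℕ) : Prop :=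
  β.2 ≤ star d α.1 ∧ star d α.1 < β.1

instance (d : ℕ) : ∀ α β, Decidable (Connected d α β) := fun α β => by
  unfold Connected; infer_instance

/-- The connected components of a `v`-chain. -/
def components (d : ℕ) (C : List (ℕ × ℕ)) : List (List (ℕ × ℕ)) :=
  C.splitBy (fun a b => decide (Connected d a b))

/-- The three possible types of an element of a `v`-chain. -/
inductive VType | V | H | S
deriving DecidableEq

/-- The type of an element `α` of a `v`-chain `C`: type V if `α` is not the last element
of its connected component or that component has even cardinality; otherwise type H if
`p_h(α) ∈ N(v)` (i.e. `r > r*`) and type S if not. -/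
def typeOf (d : ℕ) (C : List (ℕ × ℕ)) (α : ℕ × ℕ) : VType :=
  match (components d C).find? (fun g => decide (α ∈ g)) with
  | some g =>
      if g.getLast? = some α ∧ Odd g.length then
        (if star d α.1 < α.1 then VType.H else VType.S)
      else VType.V
  | none => VType.V

/-- `𝔖_{C,α}`. -/
def SCa (d : ℕ) (C : List (ℕ × ℕ)) (α : ℕ × ℕ) : Multiset (ℕ × ℕ) :=
  match typeOf d C α with
  | VType.V => {pv d α}
  | VType.H => {pv d α, ph d α}
  | VType.S => {α, hash d α}

/-- `𝔖_C`: the multiset union of the `𝔖_{C,α}` over `α ∈ C`. -/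
def SC (d : ℕ) (C : List (ℕ × ℕ)) : Multiset (ℕ × ℕ) :=
  (C.map (fun α => SCa d C α)).sum

/-- `q_{C,α}`. -/
def qCa (d : ℕ) (C : List (ℕ × ℕ)) (α : ℕ × ℕ) : ℕ × ℕ :=
  match typeOf d C α with
  | VType.S => α
  | _ => pv d α

/-- A strictly decreasing chain of elements of the monomial `S`. -/
def IsChainIn (S : Multiset (ℕ × ℕ)) (L : List (ℕ × ℕ)) : Prop :=
  L.Chain' pgt ∧ ∀ β ∈ L, β ∈ S

/-- The depth of `α` in a monomial `S` of `N(v)`: the maximal length of a strictly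
decreasing chain of elements of `S` ending at `α`. -/
noncomputable def depth (S : Multiset (ℕ × ℕ)) (α : ℕ × ℕ) : ℕ :=
  sSup {k | ∃ L, IsChainIn S L ∧ L.getLast? = some α ∧ L.length = k}

/-- The o-depth of `α` in a `v`-chain `C`: the depth of `q_{C,α}` in `𝔖_C`. -/
noncomputable def odepthC (d : ℕ) (C : List (ℕ × ℕ)) (α : ℕ × ℕ) : ℕ :=
  depth (SC d C) (qCa d C α)

/-- The o-depth of `α` in a monomial `S` of `ON(v)`: the maximum of `odepthC` over
all `v`-chains in `S` containing `α`. -/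
noncomputable def odepthM (d : ℕ) (v : Finset ℕ) (S : Multiset (ℕ × ℕ)) (α : ℕ × ℕ) : ℕ :=
  sSup {k | ∃ C, IsVChain d v C ∧ (∀ β ∈ C, β ∈ S) ∧ α ∈ C ∧ odepthC d C α = k}

/-- A distinguished subset of `N(v)`. -/
def Distinguished (d : ℕ) (v : Finset ℕ) (S : Finset (ℕ × ℕ)) : Prop :=
  (∀ p ∈ S, inN d v p) ∧
  ∀ A ∈ S, ∀ B ∈ S, A ≠ B →
    A.1 ≠ B.1 ∧ A.2 ≠ B.2 ∧ (B.1 < A.1 → (B.1 < A.2 ∨ A.2 < B.2))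

/-- The element of `I(d,2d)` attached to a distinguished subset `S` of `N(v)`:
remove from `v` the column indices of elements of `S` and add their row indices. -/
def toW (v : Finset ℕ) (S : Finset (ℕ × ℕ)) : Finset ℕ :=
  (v \ S.image Prod.snd) ∪ S.image Prod.fst

/-- `w(C) = w_C`, the element of `I(d,2d)` attached to the `v`-chain `C` via the
distinguished subset `𝔖_C`. -/
def wC (d : ℕ) (v : Finset ℕ) (C : List (ℕ × ℕ)) : Finset ℕ :=
  toW v (SC d C).toFinset

/-- `w` ortho-dominates a monomial `S` in `ON(v)`: `w ≥ w(C)` for every `v`-chain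
`C` contained in `S`. -/
def ODominates (d : ℕ) (v w : Finset ℕ) (S : Multiset (ℕ × ℕ)) : Prop :=
  ∀ C : List (ℕ × ℕ), IsVChain d v C → (∀ β ∈ C, β ∈ S) → leI (wC d v C) w

/-- `x` dominates a monomial `S` in `N(v)` (in the sense of the Grassmannian case):
`x ≥ w_L` for every strictly decreasing chain `L` contained in `S`. -/
def Dominates (d : ℕ) (v x : Finset ℕ) (S : Multiset (ℕ × ℕ)) : Prop :=
  ∀ L : List (ℕ × ℕ), L.Chain' pgt → (∀ β ∈ L, β ∈ S) → leI (toW v L.toFinset) x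

/-- The `v`-degree of `θ`: half the cardinality of `v \ θ`. -/
def vdeg (v θ : Finset ℕ) : ℕ := (v \ θ).card / 2

/-- the element next to `α` in the list `C`. -/
def nextInC (C : List (ℕ × ℕ)) (α : ℕ × ℕ) : Option (ℕ × ℕ) :=
  C[C.idxOf α + 1]?

/-- The critical element of a `v`-chain: its first element whose horizontal projection
does not belong to `N(v)` (i.e. with `r ≤ r*`). -/
def critical (d : ℕ) (C : List (ℕ × ℕ)) : Option (ℕ × ℕ) :=
  C.find? (fun x => decide (x.1 ≤ star d x.1))

/-- `α` is the last element of its connected component in `C`. -/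
def isCompLast (d : ℕ) (C : List (ℕ × ℕ)) (α : ℕ × ℕ) : Prop :=
  ∃ g ∈ components d C, g.getLast? = some α

/-- The condition (*): `α` has type H in `C` and `p_h(α) ≯ β'` for some `β' ∈ 𝔖_{C,β}`. -/
def starCond (d : ℕ) (C : List (ℕ × ℕ)) (α β : ℕ × ℕ) : Prop :=
  typeOf d C α = VType.H ∧ ∃ β' ∈ SCa d C β, ¬ pgt (ph d α) β'

/-- A standard monomial in `I(d)`: a weakly decreasing sequence of elements of `I(d)`. -/
def IsStdMon (d : ℕ) (L : List (Finset ℕ)) : Prop :=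
  (∀ θ ∈ L, θ ∈ Iset d) ∧ L.Chain' (fun a b => leI b a)

/-- A standard monomial is `w`-dominated if `w ≥ θ₁`. -/
def WDominated (w : Finset ℕ) (L : List (Finset ℕ)) : Prop :=
  ∀ θ, L.head? = some θ → leI θ w

/-- A standard monomial is `v`-compatible if each member is comparable with `v`
and distinct from `v`. -/
def VCompatible (v : Finset ℕ) (L : List (Finset ℕ)) : Prop :=
  ∀ θ ∈ L, θ ≠ v ∧ (leI θ v ∨ leI v θ)

/-- The degree of a standard monomial: the sum of the `v`-degrees of its members. -/
def stdDeg (v : Finset ℕ) (L : List (Finset ℕ)) : ℕ :=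
  (L.map (fun θ => vdeg v θ)).sum

end OG

namespace OGAux
open OG

/-! ### Counting characterization of `leI` -/

theorem countP_le_of_forall₂ (t : ℕ) {a b : List ℕ} (h : List.Forall₂ (· ≤ ·) a b) :
    a.countP (fun x => t ≤ x) ≤ b.countP (fun x => t ≤ x) := by
  induction h with
  | nil => simp
  | @cons x y l₁ l₂ hab htl ih =>
    simp only [List.countP_cons, decide_eq_true_eq]
    by_cases h1 : t ≤ x
    · have h2 : t ≤ y := le_trans h1 hab
      simp only [h1, h2, if_true, decide_eq_true_eq]
      omega
    · by_cases h2 : t ≤ y <;> simp only [h1, h2, if_true, if_false, decide_eq_true_eq] <;> omega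

theorem forall₂_of_counts (a b : List ℕ) (ha : a.Pairwise (· ≤ ·)) (hb : b.Pairwise (· ≤ ·))
    (hlen : a.length = b.length)
    (hcnt : ∀ t, a.countP (fun x => t ≤ x) ≤ b.countP (fun x => t ≤ x)) :
    List.Forall₂ (· ≤ ·) a b := by
  rw [List.forall₂_iff_get]
  refine ⟨hlen, fun i h₁ h₂ => ?_⟩
  simp only [List.get_eq_getElem]
  by_contra hcon
  push_neg at hcon  -- b[i] < a[i]
  set t := a[i] with ht
  have hca : a.length - i ≤ a.countP (fun x => t ≤ x) := by
    have hsplit : a.countP (fun x => t ≤ x) =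
        (a.take i).countP (fun x => t ≤ x) + (a.drop i).countP (fun x => t ≤ x) := by
      conv_lhs => rw [← List.take_append_drop i a]
      rw [List.countP_append]
    have hdrop : (a.drop i).countP (fun x => t ≤ x) = (a.drop i).length := by
      rw [List.countP_eq_length]
      intro z hz
      rw [List.drop_eq_getElem_cons h₁] at hz
      simp only [decide_eq_true_eq]
      rcases List.mem_cons.1 hz with rfl | hz
      · exact le_refl _
      · obtain ⟨j, hj, rfl⟩ := List.mem_iff_getElem.1 hz
        rw [List.length_drop] at hj
        rw [List.getElem_drop]
        have := ha.rel_get_of_le (a := ⟨i, h₁⟩) (b := ⟨i + 1 + j, by omega⟩)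
          (Fin.mk_le_mk.mpr (by omega))
        simpa using this
    rw [hsplit, hdrop, List.length_drop]
    omega
  have hcb : b.countP (fun x => t ≤ x) ≤ b.length - (i + 1) := by
    have hsplit : b.countP (fun x => t ≤ x) =
        (b.take (i+1)).countP (fun x => t ≤ x) + (b.drop (i+1)).countP (fun x => t ≤ x) := by
      conv_lhs => rw [← List.take_append_drop (i+1) b]
      rw [List.countP_append]
    have htake : (b.take (i+1)).countP (fun x => t ≤ x) = 0 := by
      rw [List.countP_eq_zero]
      intro z hz
      obtain ⟨j, hj, rfl⟩ := List.mem_take_iff_getElem.1 hz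
      simp only [decide_eq_true_eq, not_le]
      have hji : j ≤ i := by omega
      have : b[j] ≤ b[i] := by
        have := hb.rel_get_of_le (a := ⟨j, by omega⟩) (b := ⟨i, h₂⟩) (Fin.mk_le_mk.mpr hji)
        simpa using this
      omega
    have := List.countP_le_length (l := b.drop (i+1)) (p := fun x => decide (t ≤ x))
    rw [hsplit, htake, List.length_drop] at *
    omega
  have := hcnt t
  omega

theorem countP_sort (x : Finset ℕ) (p : ℕ → Prop) [DecidablePred p] :
    (x.sort (· ≤ ·)).countP (fun z => decide (p z)) = (x.filter p).card := by
  have hperm := Finset.sort_perm_toList (r := (· ≤ ·)) (s := x)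
  rw [hperm.countP_eq, ← Multiset.coe_countP, Finset.coe_toList,
    Multiset.countP_eq_card_filter]
  rfl

/-- counting version of `leI`, forward direction. -/
theorem leI_count {x y : Finset ℕ} (h : leI x y) (t : ℕ) :
    (x.filter (fun z => t ≤ z)).card ≤ (y.filter (fun z => t ≤ z)).card := by
  rw [← countP_sort, ← countP_sort]
  exact countP_le_of_forall₂ t h

theorem leI_card {x y : Finset ℕ} (h : leI x y) : x.card = y.card := by
  have := h.length_eq
  rwa [Finset.length_sort, Finset.length_sort] at this

/-- counting version of `leI`, reverse direction. -/
theorem leI_of_count {x y : Finset ℕ} (hcard : x.card = y.card)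
    (h : ∀ t, (x.filter (fun z => t ≤ z)).card ≤ (y.filter (fun z => t ≤ z)).card) :
    leI x y := by
  apply forall₂_of_counts _ _ (Finset.pairwise_sort ..) (Finset.pairwise_sort ..)
  · rw [Finset.length_sort, Finset.length_sort]; exact hcard
  · intro t
    rw [countP_sort x (fun z => t ≤ z), countP_sort y (fun z => t ≤ z)]
    exact h t

end OGAux
namespace OGAux
open OG

/-! ### Counting for `toW` -/

section ToW

variable {v : Finset ℕ} {T : Finset (ℕ × ℕ)}
variable (hrow : ∀ p ∈ T, p.1 ∉ v) (hcol : ∀ p ∈ T, p.2 ∈ v) (hlt : ∀ p ∈ T, p.2 < p.1)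
variable (hinj1 : ∀ p ∈ T, ∀ q ∈ T, p.1 = q.1 → p = q)
variable (hinj2 : ∀ p ∈ T, ∀ q ∈ T, p.2 = q.2 → p = q)

include hrow hcol hinj1 hinj2 in
theorem card_toW : (toW v T).card = v.card := by
  have hBv : T.image Prod.snd ⊆ v := by
    intro k hk
    simp only [Finset.mem_image] at hk
    obtain ⟨p, hp, rfl⟩ := hk
    exact hcol p hp
  have hdisj : Disjoint (v \ T.image Prod.snd) (T.image Prod.fst) := by
    rw [Finset.disjoint_right]
    intro k hk
    simp only [Finset.mem_image] at hk
    obtain ⟨p, hp, rfl⟩ := hk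
    simp only [Finset.mem_sdiff]
    intro ⟨h1, _⟩
    exact hrow p hp h1
  have h2 : (T.image Prod.snd).card = T.card :=
    Finset.card_image_of_injOn (fun p hp q hq h => hinj2 p hp q hq h)
  have h3 : (T.image Prod.fst).card = T.card :=
    Finset.card_image_of_injOn (fun p hp q hq h => hinj1 p hp q hq h)
  have h4 := Finset.card_le_card hBv
  unfold toW
  rw [Finset.card_union_of_disjoint hdisj, Finset.card_sdiff_of_subset hBv, h2, h3]
  omega

include hrow hcol hinj1 hinj2 in
theorem count_toW (t : ℕ) :
    ((toW v T).filter (fun z => t ≤ z)).card + (T.filter (fun p => t ≤ p.2)).card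
      = (v.filter (fun z => t ≤ z)).card + (T.filter (fun p => t ≤ p.1)).card := by
  unfold toW
  rw [Finset.filter_union]
  rw [Finset.card_union_of_disjoint]
  · have h1 : ((v \ T.image Prod.snd).filter (fun z => t ≤ z)).card
        + ((T.image Prod.snd).filter (fun z => t ≤ z)).card
        = (v.filter (fun z => t ≤ z)).card := by
      rw [← Finset.card_union_of_disjoint, ← Finset.filter_union]
      · congr 1
        rw [Finset.sdiff_union_of_subset]
        intro k hk
        simp only [Finset.mem_image] at hk
        obtain ⟨p, hp, rfl⟩ := hk
        exact hcol p hp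
      · exact Finset.disjoint_filter_filter (Finset.sdiff_disjoint)
    have h2 : ((T.image Prod.snd).filter (fun z => t ≤ z)).card
        = (T.filter (fun p => t ≤ p.2)).card := by
      rw [Finset.filter_image, Finset.card_image_of_injOn]
      intro p hp q hq h
      simp only [Finset.coe_filter, Set.mem_setOf_eq] at hp hq
      exact hinj2 p hp.1 q hq.1 h
    have h3 : ((T.image Prod.fst).filter (fun z => t ≤ z)).card
        = (T.filter (fun p => t ≤ p.1)).card := by
      rw [Finset.filter_image, Finset.card_image_of_injOn]
      intro p hp q hq h
      simp only [Finset.coe_filter, Set.mem_setOf_eq] at hp hq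
      exact hinj1 p hp.1 q hq.1 h
    omega
  · apply Finset.disjoint_filter_filter
    rw [Finset.disjoint_right]
    intro k hk
    simp only [Finset.mem_image] at hk
    obtain ⟨p, hp, rfl⟩ := hk
    simp only [Finset.mem_sdiff]
    intro ⟨h1, _⟩
    exact hrow p hp h1

end ToW

end OGAux
namespace OGAux
open OG

/-! ### Basic facts -/

instance : IsTrans (ℕ × ℕ) pgt :=
  ⟨fun _ _ _ h1 h2 => ⟨lt_trans h2.1 h1.1, lt_trans h1.2 h2.2⟩⟩

theorem pairwise_of_chain' {C : List (ℕ × ℕ)} (h : C.Chain' pgt) : C.Pairwise pgt :=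
  List.isChain_iff_pairwise.1 h

theorem star_mem_iff {d : ℕ} {v : Finset ℕ} (hv : v ∈ Iset d) {k : ℕ} (h1 : 1 ≤ k)
    (h2 : k ≤ 2 * d) : k ∈ v ↔ star d k ∉ v := hv.2.1 k h1 h2

theorem star_not_mem {d : ℕ} {v : Finset ℕ} (hv : v ∈ Iset d) {k : ℕ} (h1 : 1 ≤ k)
    (h2 : k ≤ 2 * d) (hk : k ∈ v) : star d k ∉ v := (hv.2.1 k h1 h2).1 hk

theorem star_mem {d : ℕ} {v : Finset ℕ} (hv : v ∈ Iset d) {k : ℕ} (h1 : 1 ≤ k)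
    (h2 : k ≤ 2 * d) (hk : k ∉ v) : star d k ∈ v := by
  by_contra h
  have h3 : 1 ≤ star d k := by unfold OG.star; omega
  have h4 : star d k ≤ 2 * d := by unfold OG.star; omega
  have := (hv.2.1 (star d k) h3 h4).2
  have hss : star d (star d k) = k := by unfold OG.star; omega
  rw [hss] at this
  exact h (this hk)

/-- facts about an element of ON(v) -/
theorem on_facts {d : ℕ} {v : Finset ℕ} {α : ℕ × ℕ} (h : inON d v α) :
    1 ≤ α.1 ∧ α.1 ≤ 2 * d ∧ 1 ≤ α.2 ∧ α.2 ≤ 2 * d ∧ α.1 ∉ v ∧ α.2 ∈ v ∧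
    α.2 < α.1 ∧ α.1 < star d α.2 ∧ α.2 < star d α.1 ∧ α.2 ≤ d ∧
    star d (star d α.1) = α.1 ∧ star d (star d α.2) = α.2 := by
  obtain ⟨⟨h1, h2, h3, h4, h5, h6, h7⟩, ⟨_, _, _, _, _, _, h8⟩⟩ := h
  refine ⟨h1, h2, h3, h4, h5, h6, h7, h8, ?_, ?_, ?_, ?_⟩ <;> unfold OG.star at * <;> omega

/-! ### The claim: if `α` is the last element of its component, then `star d α.1`
is not a column of `C`. -/

theorem claim_star_ne {d : ℕ} {v : Finset ℕ} {C : List (ℕ × ℕ)}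
    (hch : C.Chain' pgt) (hon : ∀ β ∈ C, inON d v β) {α : ℕ × ℕ}
    {g : List (ℕ × ℕ)} (hg : g ∈ components d C) (hαg : α ∈ g)
    (hlast : g.getLast? = some α) :
    ∀ γ ∈ C, γ.2 ≠ star d α.1 := by
  intro γ hγC heq
  have hpw : C.Pairwise pgt := pairwise_of_chain' hch
  have hαON := on_facts (hon α (by
    have := List.flatten_splitBy (fun a b => decide (Connected d a b)) C
    rw [← this]
    exact List.mem_flatten.2 ⟨g, hg, hαg⟩))
  have hγON := on_facts (hon γ hγC)
  -- γ.2 = star d α.1 > α.2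
  have hgtcol : α.2 < γ.2 := by rw [heq]; exact hαON.2.2.2.2.2.2.2.2.1
  -- decompose components
  obtain ⟨G₁, G₂, hGdec⟩ := List.append_of_mem hg
  have h0 : (components d C).flatten = C := by
    unfold components
    exact List.flatten_splitBy _ _
  rw [hGdec] at h0
  simp only [List.flatten_append, List.flatten_cons] at h0
  -- h0 : G₁.flatten ++ (g ++ G₂.flatten) = C
  have hgne : g ≠ [] := List.ne_nil_of_mem hαg
  have hglast : g.getLast hgne = α := by
    rw [List.getLast?_eq_getLast hgne, Option.some_inj] at hlast
    exact hlast
  have hgdec : g.dropLast ++ [α] = g := by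
    conv_rhs => rw [← List.dropLast_append_getLast hgne, hglast]
  -- C = (G₁.flatten ++ g.dropLast) ++ (α :: G₂.flatten)
  have hC2 : (G₁.flatten ++ g.dropLast) ++ (α :: G₂.flatten) = C := by
    rw [← h0, ← hgdec]
    simp
  have hγ2 : γ ∈ G₂.flatten := by
    have hpw2 : List.Pairwise pgt ((G₁.flatten ++ g.dropLast) ++ (α :: G₂.flatten)) := by
      rw [hC2]; exact hpw
    rw [List.pairwise_append] at hpw2
    have hγsplit : γ ∈ (G₁.flatten ++ g.dropLast) ∨ γ ∈ (α :: G₂.flatten) := by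
      have : γ ∈ (G₁.flatten ++ g.dropLast) ++ (α :: G₂.flatten) := by rw [hC2]; exact hγC
      exact List.mem_append.1 this
    rcases hγsplit with h | h
    · have := hpw2.2.2 γ h α List.mem_cons_self
      have hc := this.2  -- γ.2 < α.2
      omega
    · rcases List.mem_cons.1 h with rfl | h
      · omega
      · exact h
  cases G₂ with
  | nil => simp at hγ2
  | cons g₂ G₂' =>
    have hg₂mem : g₂ ∈ components d C := by rw [hGdec]; simp
    have hg₂ne : g₂ ≠ [] := by
      intro hnil
      rw [hnil] at hg₂mem
      exact List.nil_notMem_splitBy _ _ hg₂mem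
    set β := g₂.head hg₂ne with hβ
    have hβg₂ : β ∈ g₂ := List.head_mem hg₂ne
    have hβC : β ∈ C := by
      rw [← h0]
      simp only [List.mem_append, List.flatten_cons]
      right; right; left; exact hβg₂
    have hβON := on_facts (hon β hβC)
    -- junction fact
    have hjun := List.isChain_getLast_head_splitBy (fun a b => decide (Connected d a b)) C
    have hcomp_eq : C.splitBy (fun a b => decide (Connected d a b)) = G₁ ++ g :: g₂ :: G₂' := by
      rw [← hGdec]; rfl
    rw [hcomp_eq] at hjun
    have hjun2 := (List.isChain_append.1 hjun).2.1
    have hrel := (List.isChain_cons_cons.1 hjun2).1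
    obtain ⟨ha, hb, hfalse⟩ := hrel
    have hlasteq : g.getLast ha = α := by
      have := List.getLast?_eq_getLast ha
      rw [hlast, Option.some_inj] at this
      exact this.symm
    have hheadeq : g₂.head hb = β := rfl
    rw [hlasteq, hheadeq] at hfalse
    have hnc : ¬ Connected d α β := by
      intro hcon
      rw [decide_eq_false_iff_not] at hfalse
      exact hfalse hcon
    unfold Connected at hnc
    push_neg at hnc
    -- γ = β or pgt β γ
    have hγrel : γ = β ∨ pgt β γ := by
      have hsub : (g₂ ++ G₂'.flatten).Sublist C := by
        have h1 : (g₂ ++ G₂'.flatten).Sublist (g ++ (g₂ ++ G₂'.flatten)) :=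
          List.sublist_append_right _ _
        have h2 : (g ++ (g₂ ++ G₂'.flatten)).Sublist
            (G₁.flatten ++ (g ++ (g₂ ++ G₂'.flatten))) := List.sublist_append_right _ _
        have h3 := h1.trans h2
        have h4 : G₁.flatten ++ (g ++ (g₂ ++ G₂'.flatten)) = C := by
          rw [← h0]; simp [List.flatten_cons]
        rwa [h4] at h3
      have hpw3 : List.Pairwise pgt (g₂ ++ G₂'.flatten) := List.Pairwise.sublist hsub hpw
      have hg₂dec : β :: g₂.tail = g₂ := List.cons_head_tail hg₂ne
      rw [← hg₂dec, List.cons_append, List.pairwise_cons] at hpw3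
      have hγ3 : γ ∈ g₂ ++ G₂'.flatten := by
        simpa [List.flatten_cons] using hγ2
      rw [← hg₂dec, List.cons_append] at hγ3
      rcases List.mem_cons.1 hγ3 with rfl | h
      · left; rfl
      · right; exact hpw3.1 γ h
    rcases hγrel with rfl | hpgt
    · -- γ = β : β.2 = star d α.1
      have h1 := hnc (le_of_eq heq)
      omega
    · have h1 : β.2 ≤ OG.star d α.1 := by
        have := hpgt.2
        omega
      have h2 := hnc h1
      have := hpgt.1
      omega

end OGAux
namespace OGAux
open OG

/-! ### SCa / SC structure -/

theorem SCa_eq_V {d : ℕ} {C : List (ℕ × ℕ)} {α : ℕ × ℕ} (h : typeOf d C α = VType.V) :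
    SCa d C α = {pv d α} := by unfold SCa; rw [h]

theorem SCa_eq_H {d : ℕ} {C : List (ℕ × ℕ)} {α : ℕ × ℕ} (h : typeOf d C α = VType.H) :
    SCa d C α = {pv d α, ph d α} := by unfold SCa; rw [h]

theorem SCa_eq_S {d : ℕ} {C : List (ℕ × ℕ)} {α : ℕ × ℕ} (h : typeOf d C α = VType.S) :
    SCa d C α = {α, hash d α} := by unfold SCa; rw [h]

theorem mem_SCa_cases {d : ℕ} {C : List (ℕ × ℕ)} {α x : ℕ × ℕ} (h : x ∈ SCa d C α) :
    (typeOf d C α ≠ VType.S ∧ x = pv d α) ∨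
    (typeOf d C α = VType.H ∧ x = ph d α) ∨
    (typeOf d C α = VType.S ∧ (x = α ∨ x = hash d α)) := by
  rcases htype : typeOf d C α with _ | _ | _
  · rw [SCa_eq_V htype] at h
    simp only [Multiset.mem_singleton] at h
    exact Or.inl ⟨by simp, h⟩
  · rw [SCa_eq_H htype] at h
    rcases Multiset.mem_cons.1 h with h | h
    · exact Or.inl ⟨by simp, h⟩
    · exact Or.inr (Or.inl ⟨rfl, by simpa using h⟩)
  · rw [SCa_eq_S htype] at h
    rcases Multiset.mem_cons.1 h with h | h
    · exact Or.inr (Or.inr ⟨rfl, Or.inl h⟩)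
    · exact Or.inr (Or.inr ⟨rfl, Or.inr (by simpa using h)⟩)

theorem pv_mem_SCa {d : ℕ} {C : List (ℕ × ℕ)} {α : ℕ × ℕ} (h : typeOf d C α ≠ VType.S) :
    pv d α ∈ SCa d C α := by
  rcases htype : typeOf d C α with _ | _ | _
  · rw [SCa_eq_V htype]; simp
  · rw [SCa_eq_H htype]; simp
  · exact absurd htype h

theorem self_mem_SCa {d : ℕ} {C : List (ℕ × ℕ)} {α : ℕ × ℕ} (h : typeOf d C α = VType.S) :
    α ∈ SCa d C α := by rw [SCa_eq_S h]; simp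

theorem hash_mem_SCa {d : ℕ} {C : List (ℕ × ℕ)} {α : ℕ × ℕ} (h : typeOf d C α = VType.S) :
    hash d α ∈ SCa d C α := by rw [SCa_eq_S h]; simp

theorem mem_sum_map {d : ℕ} {C : List (ℕ × ℕ)} {x : ℕ × ℕ} : ∀ {l : List (ℕ × ℕ)},
    x ∈ (l.map (fun α => SCa d C α)).sum ↔ ∃ α ∈ l, x ∈ SCa d C α := by
  intro l
  induction l with
  | nil => simp
  | cons a l ih =>
    simp only [List.map_cons, List.sum_cons, Multiset.mem_add, List.mem_cons]
    constructor
    · rintro (h | h)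
      · exact ⟨a, Or.inl rfl, h⟩
      · obtain ⟨α, hα, hx⟩ := ih.1 h
        exact ⟨α, Or.inr hα, hx⟩
    · rintro ⟨α, (rfl | hα), hx⟩
      · exact Or.inl hx
      · exact Or.inr (ih.2 ⟨α, hα, hx⟩)

theorem mem_SC_iff {d : ℕ} {C : List (ℕ × ℕ)} {x : ℕ × ℕ} :
    x ∈ SC d C ↔ ∃ α ∈ C, x ∈ SCa d C α := mem_sum_map

/-- from `typeOf ≠ V`, extract the component. -/
theorem typeOf_ne_V_imp {d : ℕ} {C : List (ℕ × ℕ)} {α : ℕ × ℕ}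
    (h : typeOf d C α ≠ VType.V) :
    ∃ g ∈ components d C, α ∈ g ∧ g.getLast? = some α := by
  unfold typeOf at h
  rcases hfind : (components d C).find? (fun g => decide (α ∈ g)) with _ | g
  · rw [hfind] at h; exact absurd rfl h
  · rw [hfind] at h
    dsimp only at h
    refine ⟨g, List.mem_of_find?_eq_some hfind, ?_, ?_⟩
    · have := List.find?_some hfind
      simpa using this
    · by_contra hne
      have : ¬(g.getLast? = some α ∧ Odd g.length) := fun ⟨h1, _⟩ => hne h1
      rw [if_neg this] at h
      exact h rfl

theorem typeOf_H_imp {d : ℕ} {C : List (ℕ × ℕ)} {α : ℕ × ℕ}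
    (h : typeOf d C α = VType.H) : star d α.1 < α.1 := by
  unfold typeOf at h
  rcases hfind : (components d C).find? (fun g => decide (α ∈ g)) with _ | g
  · rw [hfind] at h; exact absurd h (by simp)
  · rw [hfind] at h
    dsimp only at h
    by_cases hc : g.getLast? = some α ∧ Odd g.length
    · rw [if_pos hc] at h
      by_cases hr : star d α.1 < α.1
      · exact hr
      · rw [if_neg hr] at h; exact absurd h (by simp)
    · rw [if_neg hc] at h; exact absurd h (by simp)

/-- the claim, applied to an element of non-V type. -/
theorem star_ne_of_typeOf {d : ℕ} {v : Finset ℕ} {C : List (ℕ × ℕ)}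
    (hch : C.Chain' pgt) (hon : ∀ β ∈ C, inON d v β) {α : ℕ × ℕ}
    (h : typeOf d C α ≠ VType.V) : ∀ γ ∈ C, γ.2 ≠ star d α.1 := by
  obtain ⟨g, hg, hαg, hlast⟩ := typeOf_ne_V_imp h
  exact claim_star_ne hch hon hg hαg hlast

/-- distinct elements of a pgt-pairwise list are comparable -/
theorem pairwise_rel : ∀ {l : List (ℕ × ℕ)}, l.Pairwise pgt → ∀ {a b : ℕ × ℕ},
    a ∈ l → b ∈ l → a ≠ b → pgt a b ∨ pgt b a := by
  intro l h
  induction h with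
  | nil => intro a b ha _ _; cases ha
  | @cons x l hx hp ih =>
    intro a b ha hb hne
    rcases List.mem_cons.1 ha with rfl | ha'
    · rcases List.mem_cons.1 hb with rfl | hb'
      · exact absurd rfl hne
      · exact Or.inl (hx b hb')
    · rcases List.mem_cons.1 hb with rfl | hb'
      · exact Or.inr (hx a ha')
      · exact ih ha' hb' hne

theorem col_inj {C : List (ℕ × ℕ)} (hch : C.Chain' pgt) {a b : ℕ × ℕ}
    (ha : a ∈ C) (hb : b ∈ C) (h : a.2 = b.2) : a = b := by
  by_contra hne
  rcases pairwise_rel (pairwise_of_chain' hch) ha hb hne with h1 | h1 <;>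
    · have := h1.2; omega

theorem row_inj {C : List (ℕ × ℕ)} (hch : C.Chain' pgt) {a b : ℕ × ℕ}
    (ha : a ∈ C) (hb : b ∈ C) (h : a.1 = b.1) : a = b := by
  by_contra hne
  rcases pairwise_rel (pairwise_of_chain' hch) ha hb hne with h1 | h1 <;>
    · have := h1.1; omega

end OGAux
namespace OGAux
open OG

section SCProps

variable {d : ℕ} {v : Finset ℕ} {C : List (ℕ × ℕ)}
variable (hv : v ∈ Iset d) (hch : C.Chain' pgt) (hon : ∀ β ∈ C, inON d v β)

include hv hch hon in
theorem sc_facts : ∀ x ∈ SC d C, x.1 ∉ v ∧ x.2 ∈ v ∧ x.2 < x.1 := by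
  intro x hx
  obtain ⟨α, hα, hxa⟩ := mem_SC_iff.1 hx
  obtain ⟨a1, a2, a3, a4, a5, a6, a7, a8, a9, a10, a11, a12⟩ := on_facts (hon α hα)
  rcases mem_SCa_cases hxa with ⟨hT, rfl⟩ | ⟨hT, rfl⟩ | ⟨hT, rfl | rfl⟩
  · refine ⟨star_not_mem hv a3 a4 a6, a6, ?_⟩
    simp only [OG.pv]
    unfold OG.star
    omega
  · have := typeOf_H_imp hT
    exact ⟨a5, star_mem hv a1 a2 a5, this⟩
  · exact ⟨a5, a6, a7⟩
  · refine ⟨star_not_mem hv a3 a4 a6, star_mem hv a1 a2 a5, ?_⟩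
    simp only [OG.hash]
    unfold OG.star
    omega

include hv hch hon in
theorem sc_fst_inj : ∀ x ∈ SC d C, ∀ y ∈ SC d C, x.1 = y.1 → x = y := by
  intro x hx y hy heq
  obtain ⟨α, hα, hxa⟩ := mem_SC_iff.1 hx
  obtain ⟨β, hβ, hya⟩ := mem_SC_iff.1 hy
  obtain ⟨a1, a2, a3, a4, a5, a6, a7, a8, a9, a10, a11, a12⟩ := on_facts (hon α hα)
  obtain ⟨b1, b2, b3, b4, b5, b6, b7, b8, b9, b10, b11, b12⟩ := on_facts (hon β hβ)
  have hcolinj : α.2 = β.2 → α = β := col_inj hch hα hβ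
  have hrowinj : α.1 = β.1 → α = β := row_inj hch hα hβ
  have hclα : typeOf d C α ≠ VType.V → β.2 ≠ OG.star d α.1 :=
    fun hne => star_ne_of_typeOf hch hon hne β hβ
  have hclβ : typeOf d C β ≠ VType.V → α.2 ≠ OG.star d β.1 :=
    fun hne => star_ne_of_typeOf hch hon hne α hα
  rcases mem_SCa_cases hxa with ⟨hTx, hxe⟩ | ⟨hTx, hxe⟩ | ⟨hTx, hxe | hxe⟩ <;>
    rcases mem_SCa_cases hya with ⟨hTy, hye⟩ | ⟨hTy, hye⟩ | ⟨hTy, hye | hye⟩ <;>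
      rw [hxe, hye] at heq ⊢ <;>
        (try simp only [OG.pv, OG.ph, OG.hash] at heq)
  · have hab : α = β := hcolinj (by unfold OG.star at heq; omega)
    rw [hab]
  · exfalso
    have hcl := hclβ (by rw [hTy]; simp)
    exact hcl (by unfold OG.star at heq ⊢; omega)
  · exfalso
    have hcl := hclβ (by rw [hTy]; simp)
    exact hcl (by unfold OG.star at heq ⊢; omega)
  · exfalso
    have hab : α = β := hcolinj (by unfold OG.star at heq; omega)
    rw [hab] at hTx
    exact hTx hTy
  · exfalso
    have hcl := hclα (by rw [hTx]; simp)
    exact hcl (by unfold OG.star at heq ⊢; omega)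
  · have hab : α = β := hrowinj heq
    rw [hab]
  · exfalso
    have hab : α = β := hrowinj heq
    rw [hab, hTy] at hTx
    simp at hTx
  · exfalso
    have hcl := hclα (by rw [hTx]; simp)
    exact hcl (by unfold OG.star at heq ⊢; omega)
  · exfalso
    have hcl := hclα (by rw [hTx]; simp)
    exact hcl (by unfold OG.star at heq ⊢; omega)
  · exfalso
    have hab : α = β := hrowinj heq
    rw [hab, hTy] at hTx
    simp at hTx
  · have hab : α = β := hrowinj heq
    rw [hab]
  · exfalso
    have hcl := hclα (by rw [hTx]; simp)
    exact hcl (by unfold OG.star at heq ⊢; omega)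
  · exfalso
    have hab : α = β := hcolinj (by unfold OG.star at heq; omega)
    rw [hab] at hTx
    exact hTy hTx
  · exfalso
    have hcl := hclβ (by rw [hTy]; simp)
    exact hcl (by unfold OG.star at heq ⊢; omega)
  · exfalso
    have hcl := hclβ (by rw [hTy]; simp)
    exact hcl (by unfold OG.star at heq ⊢; omega)
  · have hab : α = β := hcolinj (by unfold OG.star at heq; omega)
    rw [hab]

include hv hch hon in
theorem sc_snd_inj : ∀ x ∈ SC d C, ∀ y ∈ SC d C, x.2 = y.2 → x = y := by
  intro x hx y hy heq
  obtain ⟨α, hα, hxa⟩ := mem_SC_iff.1 hx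
  obtain ⟨β, hβ, hya⟩ := mem_SC_iff.1 hy
  obtain ⟨a1, a2, a3, a4, a5, a6, a7, a8, a9, a10, a11, a12⟩ := on_facts (hon α hα)
  obtain ⟨b1, b2, b3, b4, b5, b6, b7, b8, b9, b10, b11, b12⟩ := on_facts (hon β hβ)
  have hcolinj : α.2 = β.2 → α = β := col_inj hch hα hβ
  have hrowinj : α.1 = β.1 → α = β := row_inj hch hα hβ
  have hclα : typeOf d C α ≠ VType.V → β.2 ≠ OG.star d α.1 :=
    fun hne => star_ne_of_typeOf hch hon hne β hβ
  have hclβ : typeOf d C β ≠ VType.V → α.2 ≠ OG.star d β.1 :=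
    fun hne => star_ne_of_typeOf hch hon hne α hα
  rcases mem_SCa_cases hxa with ⟨hTx, hxe⟩ | ⟨hTx, hxe⟩ | ⟨hTx, hxe | hxe⟩ <;>
    rcases mem_SCa_cases hya with ⟨hTy, hye⟩ | ⟨hTy, hye⟩ | ⟨hTy, hye | hye⟩ <;>
      rw [hxe, hye] at heq ⊢ <;>
        (try simp only [OG.pv, OG.ph, OG.hash] at heq)
  · have hab : α = β := hcolinj heq
    rw [hab]
  · exfalso
    have hcl := hclβ (by rw [hTy]; simp)
    exact hcl (by unfold OG.star at heq ⊢; omega)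
  · exfalso
    have hab : α = β := hcolinj heq
    rw [hab] at hTx
    exact hTx hTy
  · exfalso
    have hcl := hclβ (by rw [hTy]; simp)
    exact hcl (by unfold OG.star at heq ⊢; omega)
  · exfalso
    have hcl := hclα (by rw [hTx]; simp)
    exact hcl (by unfold OG.star at heq ⊢; omega)
  · have hab : α = β := hrowinj (by unfold OG.star at heq; omega)
    rw [hab]
  · exfalso
    have hcl := hclα (by rw [hTx]; simp)
    exact hcl (by unfold OG.star at heq ⊢; omega)
  · exfalso
    have hab : α = β := hrowinj (by unfold OG.star at heq; omega)
    rw [hab, hTy] at hTx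
    simp at hTx
  · exfalso
    have hab : α = β := hcolinj heq
    rw [hab] at hTx
    exact hTy hTx
  · exfalso
    have hcl := hclβ (by rw [hTy]; simp)
    exact hcl (by unfold OG.star at heq ⊢; omega)
  · have hab : α = β := hcolinj heq
    rw [hab]
  · exfalso
    have hcl := hclβ (by rw [hTy]; simp)
    exact hcl (by unfold OG.star at heq ⊢; omega)
  · exfalso
    have hcl := hclα (by rw [hTx]; simp)
    exact hcl (by unfold OG.star at heq ⊢; omega)
  · exfalso
    have hab : α = β := hrowinj (by unfold OG.star at heq; omega)
    rw [hab, hTy] at hTx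
    simp at hTx
  · exfalso
    have hcl := hclα (by rw [hTx]; simp)
    exact hcl (by unfold OG.star at heq ⊢; omega)
  · have hab : α = β := hrowinj (by unfold OG.star at heq; omega)
    rw [hab]

end SCProps

end OGAux
namespace OGAux
open OG

/-- the map from chain elements to elements of `𝔖_C`. -/
def fmap (d : ℕ) (C : List (ℕ × ℕ)) (β : ℕ × ℕ) : ℕ × ℕ :=
  if typeOf d C (if β.1 < OG.star d β.2 then β else hash d β) = VType.S then β
  else pv d (if β.1 < OG.star d β.2 then β else hash d β)

theorem provenance {d : ℕ} {C : List (ℕ × ℕ)} {β : ℕ × ℕ}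
    (h : β ∈ (↑C : Multiset (ℕ × ℕ)) + (↑C : Multiset (ℕ × ℕ)).map (hash d)) :
    β ∈ C ∨ ∃ α ∈ C, β = hash d α := by
  rcases Multiset.mem_add.1 h with h | h
  · exact Or.inl (Multiset.mem_coe.1 h)
  · obtain ⟨α, hα, rfl⟩ := Multiset.mem_map.1 h
    exact Or.inr ⟨α, Multiset.mem_coe.1 hα, rfl⟩

theorem origin_spec {d : ℕ} {v : Finset ℕ} {C : List (ℕ × ℕ)}
    (hon : ∀ γ ∈ C, inON d v γ) {β : ℕ × ℕ}
    (h : β ∈ C ∨ ∃ α ∈ C, β = hash d α) :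
    ∃ α ∈ C, (β = α ∨ β = hash d α) ∧ (if β.1 < OG.star d β.2 then β else hash d β) = α := by
  rcases h with hβ | ⟨α, hα, rfl⟩
  · obtain ⟨a1, a2, a3, a4, a5, a6, a7, a8, a9, a10, a11, a12⟩ := on_facts (hon β hβ)
    exact ⟨β, hβ, Or.inl rfl, if_pos a8⟩
  · obtain ⟨a1, a2, a3, a4, a5, a6, a7, a8, a9, a10, a11, a12⟩ := on_facts (hon α hα)
    refine ⟨α, hα, Or.inr rfl, ?_⟩
    have hcond : ¬ ((hash d α).1 < OG.star d (hash d α).2) := by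
      simp only [OG.hash]
      rw [a11]
      omega
    rw [if_neg hcond]
    simp only [OG.hash]
    rw [a11, a12]

theorem not_both {d : ℕ} {v : Finset ℕ} {L : List (ℕ × ℕ)} (hLch : L.Chain' pgt)
    {α : ℕ × ℕ} (hα : inON d v α) (h1 : α ∈ L) (h2 : hash d α ∈ L) : False := by
  obtain ⟨a1, a2, a3, a4, a5, a6, a7, a8, a9, a10, a11, a12⟩ := on_facts hα
  have hne : α ≠ hash d α := by
    intro h
    have : α.1 = (hash d α).1 := by rw [← h]
    simp only [OG.hash] at this
    omega
  rcases pairwise_rel (pairwise_of_chain' hLch) h1 h2 hne with h | h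
  · have := h.1
    simp only [OG.hash] at this
    omega
  · have := h.2
    simp only [OG.hash] at this
    omega

theorem cross_le {d : ℕ} {v : Finset ℕ} {C : List (ℕ × ℕ)} (hv : v ∈ Iset d)
    (hch : C.Chain' pgt) (hon : ∀ γ ∈ C, inON d v γ) {L : List (ℕ × ℕ)}
    (hLch : L.Chain' pgt)
    (hLsub : ∀ β ∈ L, β ∈ (↑C : Multiset (ℕ × ℕ)) + (↑C : Multiset (ℕ × ℕ)).map (hash d))
    (t : ℕ) :
    (L.toFinset.filter (fun p => p.2 < t ∧ t ≤ p.1)).card ≤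
      ((SC d C).toFinset.filter (fun p => p.2 < t ∧ t ≤ p.1)).card := by
  apply Finset.card_le_card_of_injOn (fmap d C)
  · intro β hβ
    rw [Finset.mem_coe, Finset.mem_filter] at hβ
    obtain ⟨hβL, hβc1, hβc2⟩ := hβ
    obtain ⟨α, hα, hβor, hdisc⟩ :=
      origin_spec hon (provenance (hLsub β (List.mem_toFinset.1 hβL)))
    obtain ⟨a1, a2, a3, a4, a5, a6, a7, a8, a9, a10, a11, a12⟩ := on_facts (hon α hα)
    rw [Finset.mem_coe, Finset.mem_filter, Multiset.mem_toFinset]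
    unfold fmap
    rw [hdisc]
    by_cases hS : typeOf d C α = VType.S
    · rw [if_pos hS]
      refine ⟨mem_SC_iff.2 ⟨α, hα, ?_⟩, hβc1, hβc2⟩
      rcases hβor with rfl | rfl
      · exact self_mem_SCa hS
      · exact hash_mem_SCa hS
    · rw [if_neg hS]
      refine ⟨mem_SC_iff.2 ⟨α, hα, pv_mem_SCa hS⟩, ?_, ?_⟩
      · simp only [OG.pv]
        rcases hβor with hβe | hβe
        · rw [hβe] at hβc1; exact hβc1
        · rw [hβe] at hβc1
          simp only [OG.hash] at hβc1
          unfold OG.star at *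
          omega
      · simp only [OG.pv]
        rcases hβor with hβe | hβe
        · rw [hβe] at hβc2; omega
        · rw [hβe] at hβc2
          simp only [OG.hash] at hβc2
          exact hβc2
  · intro β hβ β' hβ' heq
    simp only [Finset.coe_filter, Set.mem_setOf_eq] at hβ hβ'
    obtain ⟨hβL, hβc1, hβc2⟩ := hβ
    obtain ⟨hβL', hβc1', hβc2'⟩ := hβ'
    obtain ⟨α, hα, hβor, hdisc⟩ :=
      origin_spec hon (provenance (hLsub β (List.mem_toFinset.1 hβL)))
    obtain ⟨α', hα', hβor', hdisc'⟩ :=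
      origin_spec hon (provenance (hLsub β' (List.mem_toFinset.1 hβL')))
    obtain ⟨a1, a2, a3, a4, a5, a6, a7, a8, a9, a10, a11, a12⟩ := on_facts (hon α hα)
    obtain ⟨b1, b2, b3, b4, b5, b6, b7, b8, b9, b10, b11, b12⟩ := on_facts (hon α' hα')
    unfold fmap at heq
    rw [hdisc] at heq
    rw [hdisc'] at heq
    by_cases hS : typeOf d C α = VType.S <;> by_cases hS' : typeOf d C α' = VType.S
    · rwa [if_pos hS, if_pos hS'] at heq
    · -- β S-branch, β' pv-branch
      rw [if_pos hS, if_neg hS'] at heq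
      exfalso
      rcases hβor with hβe | hβe
      · -- α = pv α' ⇒ α = α' ⇒ type contradiction
        have h0 : α = pv d α' := by rw [← hβe]; exact heq
        have hcc : α.2 = α'.2 := by rw [h0]; rfl
        have hab : α = α' := col_inj hch hα hα' hcc
        rw [hab] at hS
        exact hS' hS
      · -- hash α = pv α'
        have h0 : hash d α = pv d α' := by rw [← hβe]; exact heq
        have h1 : OG.star d α.2 = OG.star d α'.2 := by
          have := congrArg Prod.fst h0
          simpa [OG.hash, OG.pv] using this
        have hcc : α.2 = α'.2 := by unfold OG.star at h1; omega
        have hab : α = α' := col_inj hch hα hα' hcc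
        have h2 : OG.star d α.1 = α'.2 := by
          have := congrArg Prod.snd h0
          simpa [OG.hash, OG.pv] using this
        rw [← hab] at h2
        omega
    · -- β pv-branch, β' S-branch
      rw [if_neg hS, if_pos hS'] at heq
      exfalso
      rcases hβor' with hβe' | hβe'
      · have h0 : pv d α = α' := by rw [← hβe']; exact heq
        have hcc : α.2 = α'.2 := by rw [← h0]; simp [OG.pv]
        have hab : α = α' := col_inj hch hα hα' hcc
        rw [← hab] at hS'
        exact hS hS'
      · have h0 : pv d α = hash d α' := by rw [← hβe']; exact heq
        have h1 : OG.star d α.2 = OG.star d α'.2 := by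
          have := congrArg Prod.fst h0
          simpa [OG.hash, OG.pv] using this
        have hcc : α.2 = α'.2 := by unfold OG.star at h1; omega
        have hab : α = α' := col_inj hch hα hα' hcc
        have h2 : α.2 = OG.star d α'.1 := by
          have := congrArg Prod.snd h0
          simpa [OG.hash, OG.pv] using this
        rw [hab] at h2
        omega
    · rw [if_neg hS, if_neg hS'] at heq
      have hcc : α.2 = α'.2 := by
        have : (pv d α).2 = (pv d α').2 := by rw [heq]
        simpa [OG.pv] using this
      have hab : α = α' := col_inj hch hα hα' hcc
      subst hab
      -- β, β' ∈ {α, hash α}, both in L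
      have hONα := hon α hα
      rcases hβor with hβe | hβe <;> rcases hβor' with hβe' | hβe'
      · exact hβe.trans hβe'.symm
      · exfalso
        rw [hβe] at hβL
        rw [hβe'] at hβL'
        exact not_both hLch hONα (List.mem_toFinset.1 hβL) (List.mem_toFinset.1 hβL')
      · exfalso
        rw [hβe] at hβL
        rw [hβe'] at hβL'
        exact not_both hLch hONα (List.mem_toFinset.1 hβL') (List.mem_toFinset.1 hβL)
      · exact hβe.trans hβe'.symm

theorem filter_split {T : Finset (ℕ × ℕ)} (hlt : ∀ p ∈ T, p.2 < p.1) (t : ℕ) :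
    (T.filter (fun p => t ≤ p.1)).card =
      (T.filter (fun p => t ≤ p.2)).card + (T.filter (fun p => p.2 < t ∧ t ≤ p.1)).card := by
  have hsplit := Finset.card_filter_add_card_filter_not
    (s := T.filter (fun p => t ≤ p.1)) (p := fun p => t ≤ p.2)

  have h1 : (T.filter (fun p => t ≤ p.1)).filter (fun p => t ≤ p.2)
      = T.filter (fun p => t ≤ p.2) := by
    rw [Finset.filter_filter]
    apply Finset.filter_congr
    intro p hp
    have := hlt p hp
    constructor <;> intro h
    · exact h.2
    · exact ⟨by omega, h⟩
  have h2 : (T.filter (fun p => t ≤ p.1)).filter (fun p => ¬ t ≤ p.2)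
      = T.filter (fun p => p.2 < t ∧ t ≤ p.1) := by
    rw [Finset.filter_filter]
    apply Finset.filter_congr
    intro p hp
    constructor <;> intro h
    · exact ⟨by omega, h.1⟩
    · exact ⟨h.2, by omega⟩
  rw [h1, h2] at hsplit
  omega

end OGAux
open OG in
/-- if `w ∈ I(d)` ortho-dominates a `v`-chain `C` (as a monomial), then `w`
dominates the monomial `C ∪ C^#` of `N(v)`. -/
theorem stmt5 (d : ℕ) (hd : 0 < d) (v : Finset ℕ) (hv : v ∈ Iset d)
    (C : List (ℕ × ℕ)) (hC : IsVChain d v C) (w : Finset ℕ) (hw : w ∈ Iset d)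
    (hod : ODominates d v w (↑C : Multiset (ℕ × ℕ))) :
    Dominates d v w ((↑C : Multiset (ℕ × ℕ)) + (↑C : Multiset (ℕ × ℕ)).map (hash d)) := by
  obtain ⟨hch, hon⟩ := hC
  intro L hLch hLsub
  -- facts about elements of L
  have hLf : ∀ β ∈ L, β.1 ∉ v ∧ β.2 ∈ v ∧ β.2 < β.1 := by
    intro β hβ
    rcases OGAux.provenance (hLsub β hβ) with hβC | ⟨α, hαC, hβe⟩
    · obtain ⟨a1, a2, a3, a4, a5, a6, a7, a8, a9, a10, a11, a12⟩ :=
        OGAux.on_facts (hon β hβC)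
      exact ⟨a5, a6, a7⟩
    · obtain ⟨a1, a2, a3, a4, a5, a6, a7, a8, a9, a10, a11, a12⟩ :=
        OGAux.on_facts (hon α hαC)
      rw [hβe]
      refine ⟨OGAux.star_not_mem hv a3 a4 a6, OGAux.star_mem hv a1 a2 a5, ?_⟩
      simp only [OG.hash]
      unfold OG.star
      omega
  -- hypotheses for `count_toW` applied to `L.toFinset`
  have hrowL : ∀ p ∈ L.toFinset, p.1 ∉ v := fun p hp => (hLf p (List.mem_toFinset.1 hp)).1
  have hcolL : ∀ p ∈ L.toFinset, p.2 ∈ v := fun p hp => (hLf p (List.mem_toFinset.1 hp)).2.1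
  have hltL : ∀ p ∈ L.toFinset, p.2 < p.1 := fun p hp => (hLf p (List.mem_toFinset.1 hp)).2.2
  have hinj1L : ∀ p ∈ L.toFinset, ∀ q ∈ L.toFinset, p.1 = q.1 → p = q := fun p hp q hq h =>
    OGAux.row_inj hLch (List.mem_toFinset.1 hp) (List.mem_toFinset.1 hq) h
  have hinj2L : ∀ p ∈ L.toFinset, ∀ q ∈ L.toFinset, p.2 = q.2 → p = q := fun p hp q hq h =>
    OGAux.col_inj hLch (List.mem_toFinset.1 hp) (List.mem_toFinset.1 hq) h
  -- hypotheses for `count_toW` applied to `(SC d C).toFinset`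
  have hrowS : ∀ p ∈ (SC d C).toFinset, p.1 ∉ v := fun p hp =>
    (OGAux.sc_facts hv hch hon p (Multiset.mem_toFinset.1 hp)).1
  have hcolS : ∀ p ∈ (SC d C).toFinset, p.2 ∈ v := fun p hp =>
    (OGAux.sc_facts hv hch hon p (Multiset.mem_toFinset.1 hp)).2.1
  have hltS : ∀ p ∈ (SC d C).toFinset, p.2 < p.1 := fun p hp =>
    (OGAux.sc_facts hv hch hon p (Multiset.mem_toFinset.1 hp)).2.2
  have hinj1S : ∀ p ∈ (SC d C).toFinset, ∀ q ∈ (SC d C).toFinset, p.1 = q.1 → p = q :=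
    fun p hp q hq h =>
      OGAux.sc_fst_inj hv hch hon p (Multiset.mem_toFinset.1 hp) q (Multiset.mem_toFinset.1 hq) h
  have hinj2S : ∀ p ∈ (SC d C).toFinset, ∀ q ∈ (SC d C).toFinset, p.2 = q.2 → p = q :=
    fun p hp q hq h =>
      OGAux.sc_snd_inj hv hch hon p (Multiset.mem_toFinset.1 hp) q (Multiset.mem_toFinset.1 hq) h
  -- ortho-domination applied to `C` itself
  have hwc : leI (wC d v C) w := hod C ⟨hch, hon⟩ (fun β hβ => Multiset.mem_coe.2 hβ)
  have hcardL : (toW v L.toFinset).card = v.card :=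
    OGAux.card_toW hrowL hcolL hinj1L hinj2L
  apply OGAux.leI_of_count
  · rw [hcardL, hv.1.1, hw.1.1]
  · intro t
    have h1 := OGAux.count_toW hrowL hcolL hinj1L hinj2L t
    have h2 := OGAux.count_toW hrowS hcolS hinj1S hinj2S t
    have h3 := OGAux.leI_count hwc t
    unfold OG.wC at h3
    have hsL := OGAux.filter_split hltL t
    have hsS := OGAux.filter_split hltS t
    have hcr := OGAux.cross_le hv hch hon hLch hLsub t
    omega
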